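/- Let X be a finite set, let σ and τ be permutations of X with τ a fixed-point-free involution, and let a, b ∈ X be distinct with τ(a) = b. Set δ_v = +1 if a and b lie in different orbits of σ and δ_v = −1 if they lie in the same orbit of σ; set δ_f = +1 if a and b lie in different orbits of τ∘σ and δ_f = −1 if they lie in the same orbit of τ∘σ. Then the Euler genus of the partial dual of (σ, τ) relative to the single edge {a, b} satisfies γ((swap a b) ∘ σ, τ) − γ(σ, τ) = δ_v + δ_f. (Proposition 6.1 specialized to a single edge, expressed via rotation systems.) -/

import Mathlib

/-- The Euler genus `γ(σ, τ) = 2c − v + |X|/2 − f` of a rotation system `(σ, τ)` on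
the finite set `X` of half-edges, where `v`, `f` and `c` are the numbers of orbits
of `σ`, of `τ∘σ`, and of the subgroup generated by `σ` and `τ`, respectively. -/
noncomputable def eulerGenus {X : Type*} [Fintype X] (σ τ : Equiv.Perm X) : ℤ :=
  2 * (Nat.card (MulAction.orbitRel.Quotient
        (Subgroup.closure {σ, τ} : Subgroup (Equiv.Perm X)) X) : ℤ)
    - (Nat.card (MulAction.orbitRel.Quotient (Subgroup.zpowers σ) X) : ℤ)
    + (Fintype.card X : ℤ) / 2
    - (Nat.card (MulAction.orbitRel.Quotient (Subgroup.zpowers (τ * σ)) X) : ℤ)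

open Equiv Equiv.Perm MulAction Subgroup

section Aux

variable {X : Type*} [Fintype X] [DecidableEq X]

/-- If a set is closed under a permutation, it is closed under all integer powers. -/
lemma aux_zpow_mem {f : Equiv.Perm X} {T : Set X}
    (hT : ∀ x ∈ T, f x ∈ T) (n : ℤ) {x : X} (hx : x ∈ T) : (f ^ n) x ∈ T := by
  have hpow : ∀ m : ℕ, (f ^ m) x ∈ T := by
    intro m
    induction m with
    | zero => simpa using hx
    | succ k ih =>
      rw [pow_succ']
      exact hT _ ih
  have hord : (0 : ℤ) < (orderOf f : ℤ) := by
    exact_mod_cast orderOf_pos f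
  have h1 : f ^ n = f ^ (n % (orderOf f : ℤ)).toNat := by
    rw [← zpow_natCast, Int.toNat_of_nonneg (Int.emod_nonneg n (by omega)),
      zpow_mod_orderOf]
  rw [h1]
  exact hpow _

lemma aux_sameCycle_iff {f : Equiv.Perm X} {x y : X} :
    f.SameCycle x y ↔ ∃ n : ℤ, (f ^ n) x = y := Iff.rfl

/-- If `a` and `b` are in different cycles of `π`, they are in the same cycle of
`swap a b * π` (merge case, connectivity). -/
lemma aux_merge_connect {π : Equiv.Perm X} {a b : X} (hab : a ≠ b)
    (h : ¬ π.SameCycle a b) : (Equiv.swap a b * π).SameCycle a b := by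
  set π' := Equiv.swap a b * π with hπ'
  -- m = least k > 0 with π^k a = a
  have hex : ∃ k : ℕ, 0 < k ∧ (π ^ k) a = a := by
    refine ⟨orderOf π, orderOf_pos π, ?_⟩
    rw [pow_orderOf_eq_one]; rfl
  classical
  let m := Nat.find hex
  have hm : 0 < m ∧ (π ^ m) a = a := Nat.find_spec hex
  have hmin : ∀ k < m, ¬(0 < k ∧ (π ^ k) a = a) := fun k hk => Nat.find_min hex hk
  have key : ∀ j < m, (π' ^ j) a = (π ^ j) a := by
    intro j hj
    induction j with
    | zero => rfl
    | succ k ih =>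
      have hk : k < m := Nat.lt_of_succ_lt hj
      rw [pow_succ', pow_succ', Equiv.Perm.mul_apply, Equiv.Perm.mul_apply, ih hk]
      show Equiv.swap a b (π ((π ^ k) a)) = π ((π ^ k) a)
      have h1 : π ((π ^ k) a) = (π ^ (k + 1)) a := by
        rw [pow_succ', Equiv.Perm.mul_apply]
      rw [h1]
      have hne1 : (π ^ (k + 1)) a ≠ a := fun hc =>
        hmin (k + 1) hj ⟨Nat.succ_pos k, hc⟩
      have hne2 : (π ^ (k + 1)) a ≠ b := fun hc =>
        h ⟨(k + 1 : ℕ), by rw [zpow_natCast]; exact hc⟩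
      exact Equiv.swap_apply_of_ne_of_ne hne1 hne2
  have hfinal : (π' ^ m) a = b := by
    obtain ⟨hm0, hma⟩ := hm
    have h1 : m = (m - 1) + 1 := (Nat.succ_pred_eq_of_pos hm0).symm
    rw [h1, pow_succ', Equiv.Perm.mul_apply, key (m - 1) (by omega)]
    show Equiv.swap a b (π ((π ^ (m - 1)) a)) = b
    have h2 : π ((π ^ (m - 1)) a) = (π ^ m) a := by
      conv_rhs => rw [h1]
      rw [pow_succ', Equiv.Perm.mul_apply]
    rw [h2, hma, Equiv.swap_apply_left]
  exact ⟨(m : ℤ), by rw [zpow_natCast]; exact hfinal⟩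

/-- If `a` and `b` are in the same cycle of `π`, they are in different cycles of
`swap a b * π` (split case, separation). -/
lemma aux_split_separate {π : Equiv.Perm X} {a b : X} (hab : a ≠ b)
    (h : π.SameCycle a b) : ¬ (Equiv.swap a b * π).SameCycle a b := by
  set π' := Equiv.swap a b * π with hπ'
  classical
  -- m = least k > 0 with π^k a = b
  have hex : ∃ k : ℕ, 0 < k ∧ (π ^ k) a = b := by
    obtain ⟨n, hn⟩ := h
    refine ⟨((n % (orderOf π : ℤ)).toNat), ?_, ?_⟩
    · rcases Nat.eq_zero_or_pos (n % (orderOf π : ℤ)).toNat with h0 | h0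
      · exfalso
        apply hab
        have : π ^ n = π ^ ((n % (orderOf π : ℤ)).toNat : ℤ) := by
          rw [Int.toNat_of_nonneg (Int.emod_nonneg n (by exact_mod_cast (orderOf_pos π).ne')),
            zpow_mod_orderOf]
        rw [this, h0] at hn
        have hn2 : a = b := by simpa using hn
        exact hn2
      · exact h0
    · have : π ^ n = π ^ ((n % (orderOf π : ℤ)).toNat : ℤ) := by
        rw [Int.toNat_of_nonneg (Int.emod_nonneg n (by exact_mod_cast (orderOf_pos π).ne')),
          zpow_mod_orderOf]
      rw [this] at hn
      rw [← zpow_natCast]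
      exact hn
  let m := Nat.find hex
  have hm : 0 < m ∧ (π ^ m) a = b := Nat.find_spec hex
  have hmin : ∀ k < m, ¬(0 < k ∧ (π ^ k) a = b) := fun k hk => Nat.find_min hex hk
  have key : ∀ j < m, (π' ^ j) a = (π ^ j) a := by
    intro j hj
    induction j with
    | zero => rfl
    | succ k ih =>
      have hk : k < m := Nat.lt_of_succ_lt hj
      rw [pow_succ', pow_succ', Equiv.Perm.mul_apply, Equiv.Perm.mul_apply, ih hk]
      show Equiv.swap a b (π ((π ^ k) a)) = π ((π ^ k) a)
      have h1 : π ((π ^ k) a) = (π ^ (k + 1)) a := by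
        rw [pow_succ', Equiv.Perm.mul_apply]
      rw [h1]
      have hne2 : (π ^ (k + 1)) a ≠ b := fun hc =>
        hmin (k + 1) hj ⟨Nat.succ_pos k, hc⟩
      have hne1 : (π ^ (k + 1)) a ≠ a := by
        intro hc
        obtain ⟨hm0, hmb⟩ := hm
        have hlt : m - (k + 1) < m := by omega
        apply hmin (m - (k + 1)) hlt
        refine ⟨by omega, ?_⟩
        have : (π ^ (m - (k + 1))) ((π ^ (k + 1)) a) = (π ^ m) a := by
          rw [← Equiv.Perm.mul_apply, ← pow_add]
          congr 2
          omega
        rw [hc] at this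
        rw [this, hmb]
      exact Equiv.swap_apply_of_ne_of_ne hne1 hne2
  have hcycle : (π' ^ m) a = a := by
    obtain ⟨hm0, hmb⟩ := hm
    have h1 : m = (m - 1) + 1 := (Nat.succ_pred_eq_of_pos hm0).symm
    rw [h1, pow_succ', Equiv.Perm.mul_apply, key (m - 1) (by omega)]
    show Equiv.swap a b (π ((π ^ (m - 1)) a)) = a
    have h2 : π ((π ^ (m - 1)) a) = (π ^ m) a := by
      conv_rhs => rw [h1]
      rw [pow_succ', Equiv.Perm.mul_apply]
    rw [h2, hmb, Equiv.swap_apply_right]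
  -- T = the π'-orbit elements {π^j a | j < m}; b ∉ T
  set T : Set X := {x | ∃ j < m, (π ^ j) a = x} with hT
  have haT : a ∈ T := ⟨0, hm.1, rfl⟩
  have hbT : b ∉ T := by
    rintro ⟨j, hj, hja⟩
    rcases Nat.eq_zero_or_pos j with h0 | h0
    · rw [h0] at hja; exact hab (by simpa using hja)
    · exact hmin j hj ⟨h0, hja⟩
  have hclosed : ∀ x ∈ T, π' x ∈ T := by
    rintro x ⟨j, hj, rfl⟩
    have h2 : (π' ^ (j + 1)) a = π' ((π' ^ j) a) := by rw [pow_succ']; rfl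
    have h1 : π' ((π ^ j) a) = (π' ^ (j + 1)) a := by
      rw [h2, key j hj]
    rcases Nat.lt_or_ge (j + 1) m with hlt | hge
    · rw [h1, key (j + 1) hlt]
      exact ⟨j + 1, hlt, rfl⟩
    · have hjm : j + 1 = m := by omega
      rw [h1, hjm, hcycle]
      exact haT
  rintro ⟨n, hn⟩
  exact hbT (hn ▸ aux_zpow_mem hclosed n haT)

/-- In the merge case, `π`-same-cycle implies `swap a b * π`-same-cycle. -/
lemma aux_merge_mono {π : Equiv.Perm X} {a b : X} (hab : a ≠ b)
    (h : ¬ π.SameCycle a b) {x y : X} (hxy : π.SameCycle x y) :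
    (Equiv.swap a b * π).SameCycle x y := by
  set π' := Equiv.swap a b * π with hπ'
  have hab' : π'.SameCycle a b := aux_merge_connect hab h
  set T : Set X := {z | π'.SameCycle x z} with hT
  have hclosed : ∀ z ∈ T, π z ∈ T := by
    intro z hz
    have hstep : π'.SameCycle z (π' z) := ⟨1, by simp⟩
    have h1 : π z = Equiv.swap a b (π' z) := by
      show π z = Equiv.swap a b (Equiv.swap a b (π z))
      rw [Equiv.swap_apply_self]
    by_cases ha : π' z = a
    · rw [h1, ha, Equiv.swap_apply_left]
      exact (hz.trans (ha ▸ hstep)).trans hab'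
    · by_cases hb : π' z = b
      · rw [h1, hb, Equiv.swap_apply_right]
        exact (hz.trans (hb ▸ hstep)).trans hab'.symm
      · rw [h1, Equiv.swap_apply_of_ne_of_ne ha hb]
        exact hz.trans hstep
  obtain ⟨n, hn⟩ := hxy
  exact hn ▸ aux_zpow_mem hclosed n (SameCycle.refl π' x)

/-- In the merge case, description of the cycles of `swap a b * π`. -/
lemma aux_merge_descr {π : Equiv.Perm X} {a b : X} (hab : a ≠ b)
    (h : ¬ π.SameCycle a b) {x y : X} (hxy : (Equiv.swap a b * π).SameCycle x y) :
    π.SameCycle x y ∨ (π.SameCycle x a ∧ π.SameCycle y b) ∨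
      (π.SameCycle x b ∧ π.SameCycle y a) := by
  set π' := Equiv.swap a b * π with hπ'
  set S : X → X → Prop := fun u v => π.SameCycle u v ∨ (π.SameCycle u a ∧ π.SameCycle v b) ∨
      (π.SameCycle u b ∧ π.SameCycle v a) with hS
  have hStrans : ∀ u v w, S u v → S v w → S u w := by
    rintro u v w (huv | ⟨hua, hvb⟩ | ⟨hub, hva⟩) (hvw | ⟨hva', hwb⟩ | ⟨hvb', hwa⟩)
    · exact Or.inl (huv.trans hvw)
    · exact Or.inr (Or.inl ⟨huv.trans hva', hwb⟩)
    · exact Or.inr (Or.inr ⟨huv.trans hvb', hwa⟩)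
    · exact Or.inr (Or.inl ⟨hua, hvw.symm.trans hvb⟩)
    · exact absurd (hva'.symm.trans hvb) h
    · exact Or.inl ((hua.trans hwa.symm))
    · exact Or.inr (Or.inr ⟨hub, hvw.symm.trans hva⟩)
    · exact Or.inl (hub.trans hwb.symm)
    · exact absurd (hva.symm.trans hvb') h
  have hclosed : ∀ z, S x z → S x (π' z) := by
    intro z hz
    have hstep : S z (π' z) := by
      have h1 : π' z = Equiv.swap a b (π z) := rfl
      by_cases hza : π z = a
      · rw [h1, hza, Equiv.swap_apply_left]
        exact Or.inr (Or.inl ⟨⟨1, by simpa using hza⟩, SameCycle.refl π b⟩)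
      · by_cases hzb : π z = b
        · rw [h1, hzb, Equiv.swap_apply_right]
          exact Or.inr (Or.inr ⟨⟨1, by simpa using hzb⟩, SameCycle.refl π a⟩)
        · rw [h1, Equiv.swap_apply_of_ne_of_ne hza hzb]
          exact Or.inl ⟨1, by simp⟩
    exact hStrans x z (π' z) hz hstep
  obtain ⟨n, hn⟩ := hxy
  exact hn ▸ aux_zpow_mem (T := {z | S x z}) (fun z hz => hclosed z hz) n
    (Or.inl (SameCycle.refl π x))

/-- The orbit relation of `zpowers π` is `SameCycle`. -/
lemma aux_orbitRel_iff (π : Equiv.Perm X) (x y : X) :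
    (⟦x⟧ : MulAction.orbitRel.Quotient (Subgroup.zpowers π) X) = ⟦y⟧ ↔
      π.SameCycle y x := by
  rw [Quotient.eq]
  show (MulAction.orbitRel (Subgroup.zpowers π) X) x y ↔ _
  rw [MulAction.orbitRel_apply, MulAction.mem_orbit_iff]
  constructor
  · rintro ⟨⟨g, hg⟩, hgy⟩
    obtain ⟨k, rfl⟩ := Subgroup.mem_zpowers_iff.mp hg
    exact ⟨k, hgy⟩
  · rintro ⟨k, hk⟩
    exact ⟨⟨π ^ k, Subgroup.mem_zpowers_iff.mpr ⟨k, rfl⟩⟩, hk⟩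

/-- Merge case: the number of cycles drops by one. -/
lemma aux_card_merge {π : Equiv.Perm X} {a b : X} (hab : a ≠ b)
    (h : ¬ π.SameCycle a b) :
    Nat.card (MulAction.orbitRel.Quotient (Subgroup.zpowers π) X) =
      Nat.card (MulAction.orbitRel.Quotient
        (Subgroup.zpowers (Equiv.swap a b * π)) X) + 1 := by
  classical
  set π' := Equiv.swap a b * π with hπ'
  set Q := MulAction.orbitRel.Quotient (Subgroup.zpowers π) X
  set Q' := MulAction.orbitRel.Quotient (Subgroup.zpowers π') X
  have hab' : π'.SameCycle a b := aux_merge_connect hab h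
  let f : Q → Option Q' := Quotient.lift
    (fun x => if π.SameCycle x b then none else some (⟦x⟧ : Q'))
    (by
      intro x y hxy
      have hxy' : π.SameCycle y x := by
        have := (aux_orbitRel_iff π x y).mp (Quotient.sound hxy)
        exact this
      by_cases hx : π.SameCycle x b
      · rw [if_pos hx, if_pos (hxy'.trans hx)]
      · rw [if_neg hx, if_neg (fun hy => hx (hxy'.symm.trans hy))]
        congr 1
        exact (aux_orbitRel_iff π' x y).mpr (aux_merge_mono hab h hxy')
      )
  have hf : Function.Bijective f := by
    constructor
    · intro q1 q2
      induction q1 using Quotient.ind with | _ x =>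
      induction q2 using Quotient.ind with | _ y =>
      intro hfeq
      by_cases hx : π.SameCycle x b <;> by_cases hy : π.SameCycle y b
      · exact (aux_orbitRel_iff π x y).mpr (hy.trans hx.symm)
      · simp only [f, Quotient.lift_mk, if_pos hx, if_neg hy] at hfeq
        exact nomatch hfeq
      · simp only [f, Quotient.lift_mk, if_pos hy, if_neg hx] at hfeq
        exact nomatch hfeq
      · simp only [f, Quotient.lift_mk, if_neg hx, if_neg hy, Option.some_inj] at hfeq
        have h1 : π'.SameCycle y x := (aux_orbitRel_iff π' x y).mp hfeq
        rcases aux_merge_descr hab h h1 with h2 | ⟨h2, h3⟩ | ⟨h2, h3⟩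
        · exact (aux_orbitRel_iff π x y).mpr h2
        · exact absurd h3 hx
        · exact absurd h2 hy
    · intro q
      rcases q with _ | q'
      · refine ⟨⟦b⟧, ?_⟩
        show (if π.SameCycle b b then none else _) = none
        rw [if_pos (SameCycle.refl π b)]
      · induction q' using Quotient.ind with | _ x =>
        by_cases hx : π.SameCycle x b
        · refine ⟨⟦a⟧, ?_⟩
          show (if π.SameCycle a b then none else some (⟦a⟧ : Q')) = some ⟦x⟧
          rw [if_neg h]
          congr 1
          exact ((aux_orbitRel_iff π' x a).mpr
            ((aux_merge_mono hab h hx).trans hab'.symm).symm).symm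
        · refine ⟨⟦x⟧, ?_⟩
          show (if π.SameCycle x b then none else some (⟦x⟧ : Q')) = some ⟦x⟧
          rw [if_neg hx]
  rw [Nat.card_eq_of_bijective f hf, Finite.card_option]

/-- A permutation of a finite type mapping a set into itself maps it onto itself. -/
lemma aux_inv_mem {g : Equiv.Perm X} {S : Set X}
    (hg : ∀ y ∈ S, g y ∈ S) : ∀ y ∈ S, g⁻¹ y ∈ S := by
  have himg : g '' S = S := by
    apply Set.eq_of_subset_of_ncard_le
    · rintro _ ⟨y, hy, rfl⟩; exact hg y hy
    · rw [Set.ncard_image_of_injective _ g.injective]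
    · exact S.toFinite
  intro y hy
  rw [← himg] at hy
  obtain ⟨z, hz, hzy⟩ := hy
  have : g⁻¹ y = z := by rw [← hzy]; simp
  rw [this]; exact hz

/-- The connected components (orbits of the generated subgroup) are unchanged. -/
lemma aux_orbit_closure_subset {σ τ : Equiv.Perm X} {a b : X}
    (hτab : τ a = b) (hτba : τ b = a) (x : X) :
    MulAction.orbit (Subgroup.closure {Equiv.swap a b * σ, τ} :
        Subgroup (Equiv.Perm X)) x ⊆
      MulAction.orbit (Subgroup.closure {σ, τ} : Subgroup (Equiv.Perm X)) x := by
  set G := (Subgroup.closure {σ, τ} : Subgroup (Equiv.Perm X))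
  set S := MulAction.orbit G x with hSdef
  have hxS : x ∈ S := MulAction.mem_orbit_self x
  have hmemS : ∀ (g : Equiv.Perm X), g ∈ G → ∀ y ∈ S, g y ∈ S := by
    rintro g hg y ⟨⟨k, hk⟩, rfl⟩
    exact ⟨⟨g, hg⟩ * ⟨k, hk⟩, rfl⟩
  have hσ' : ∀ y ∈ S, (Equiv.swap a b * σ) y ∈ S := by
    intro y hy
    have hσy : σ y ∈ S := hmemS σ (Subgroup.subset_closure (by simp)) y hy
    have hτS : ∀ z ∈ S, τ z ∈ S := hmemS τ (Subgroup.subset_closure (by simp))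
    show Equiv.swap a b (σ y) ∈ S
    by_cases ha : σ y = a
    · rw [ha, Equiv.swap_apply_left, ← hτab]
      exact hτS a (ha ▸ hσy)
    · by_cases hb : σ y = b
      · rw [hb, Equiv.swap_apply_right, ← hτba]
        exact hτS b (hb ▸ hσy)
      · rw [Equiv.swap_apply_of_ne_of_ne ha hb]
        exact hσy
  have hτ' : ∀ y ∈ S, τ y ∈ S := hmemS τ (Subgroup.subset_closure (by simp))
  rintro z ⟨⟨g, hg⟩, rfl⟩
  show g x ∈ S
  have : ∀ y ∈ S, g y ∈ S := by
    induction hg using Subgroup.closure_induction with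
    | mem u hu =>
      rcases hu with hu | hu
      · exact hu ▸ hσ'
      · exact (Set.mem_singleton_iff.mp hu) ▸ hτ'
    | one => intro y hy; simpa using hy
    | mul u v hu hv ihu ihv =>
      intro y hy
      have : (u * v) y = u (v y) := rfl
      rw [this]
      exact ihu _ (ihv _ hy)
    | inv u hu ihu => exact aux_inv_mem ihu
  exact this x hxS

lemma aux_card_closure {σ τ : Equiv.Perm X} {a b : X}
    (hτab : τ a = b) (hτba : τ b = a) :
    Nat.card (MulAction.orbitRel.Quotient
        (Subgroup.closure {Equiv.swap a b * σ, τ} : Subgroup (Equiv.Perm X)) X) =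
      Nat.card (MulAction.orbitRel.Quotient
        (Subgroup.closure {σ, τ} : Subgroup (Equiv.Perm X)) X) := by
  have horbit : ∀ x : X,
      MulAction.orbit (Subgroup.closure {Equiv.swap a b * σ, τ} :
          Subgroup (Equiv.Perm X)) x =
        MulAction.orbit (Subgroup.closure {σ, τ} : Subgroup (Equiv.Perm X)) x := by
    intro x
    apply Set.Subset.antisymm
    · exact aux_orbit_closure_subset hτab hτba x
    · have h1 : σ = Equiv.swap a b * (Equiv.swap a b * σ) := by
        rw [Equiv.swap_mul_self_mul]
      have := aux_orbit_closure_subset (σ := Equiv.swap a b * σ) (τ := τ) hτab hτba x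
      rw [← h1] at this
      exact this
  have hrel : MulAction.orbitRel
      (Subgroup.closure {Equiv.swap a b * σ, τ} : Subgroup (Equiv.Perm X)) X =
      MulAction.orbitRel (Subgroup.closure {σ, τ} : Subgroup (Equiv.Perm X)) X := by
    apply Setoid.ext
    intro x y
    rw [MulAction.orbitRel_apply, MulAction.orbitRel_apply, horbit y]
  show Nat.card (Quotient _) = Nat.card (Quotient _)
  rw [hrel]

end Aux

/-- **Proposition 6.1 for a single edge, via rotation systems.**  Let `(σ, τ)` be a
rotation system on the finite set `X` of half-edges (`τ` a fixed-point-free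
involution) and let `{a, b}` be an edge, `τ a = b`, `a ≠ b`.  With `δ_v = 1` if `a`
and `b` lie in different orbits of `σ` and `δ_v = −1` otherwise, and `δ_f = 1` if
`a` and `b` lie in different orbits of `τ∘σ` and `δ_f = −1` otherwise, the Euler
genus of the partial dual relative to the edge `{a, b}` satisfies
`γ((swap a b)∘σ, τ) − γ(σ, τ) = δ_v + δ_f`. -/
theorem partial_dual_single_edge_genus_change {X : Type*} [Fintype X] [DecidableEq X]
    (σ τ : Equiv.Perm X) (hτ : ∀ x, τ (τ x) = x) (hfp : ∀ x, τ x ≠ x)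
    (a b : X) (hab : a ≠ b) (hτab : τ a = b)
    (δv δf : ℤ)
    (hδv : δv = if σ.SameCycle a b then -1 else 1)
    (hδf : δf = if (τ * σ).SameCycle a b then -1 else 1) :
    eulerGenus (Equiv.swap a b * σ) τ - eulerGenus σ τ = δv + δf := by
  classical
  have hτba : τ b = a := by rw [← hτab, hτ]
  -- the c-terms agree
  have hc := aux_card_closure (σ := σ) (τ := τ) hτab hτba
  -- face permutation of the partial dual
  have hface : τ * (Equiv.swap a b * σ) = Equiv.swap a b * (τ * σ) := by
    rw [← mul_assoc, mul_swap_eq_swap_mul, hτab, hτba, Equiv.swap_comm, mul_assoc]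
  -- v-term
  have hv : (Nat.card (MulAction.orbitRel.Quotient
        (Subgroup.zpowers (Equiv.swap a b * σ)) X) : ℤ) =
      (Nat.card (MulAction.orbitRel.Quotient (Subgroup.zpowers σ) X) : ℤ) - δv := by
    by_cases hs : σ.SameCycle a b
    · have hns : ¬ (Equiv.swap a b * σ).SameCycle a b := aux_split_separate hab hs
      have := aux_card_merge hab hns
      rw [Equiv.swap_mul_self_mul] at this
      rw [hδv, if_pos hs, this]
      push_cast; ring
    · have := aux_card_merge hab hs
      rw [hδv, if_neg hs, this]
      push_cast; ring
  -- f-term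
  have hf : (Nat.card (MulAction.orbitRel.Quotient
        (Subgroup.zpowers (τ * (Equiv.swap a b * σ))) X) : ℤ) =
      (Nat.card (MulAction.orbitRel.Quotient (Subgroup.zpowers (τ * σ)) X) : ℤ) - δf := by
    rw [hface]
    by_cases hs : (τ * σ).SameCycle a b
    · have hns : ¬ (Equiv.swap a b * (τ * σ)).SameCycle a b := aux_split_separate hab hs
      have := aux_card_merge hab hns
      rw [Equiv.swap_mul_self_mul] at this
      rw [hδf, if_pos hs, this]
      push_cast; ring
    · have := aux_card_merge hab hs
      rw [hδf, if_neg hs, this]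
      push_cast; ring
  unfold eulerGenus
  rw [hc, hv, hf]
  ring
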